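/- arXiv:math/0501122 — 2 statements merged into one kernel-verified Lean document; each statement's English description precedes it below -/
import Mathlib

section
/- Let p and l be distinct odd primes. The group Γ = ψ(Γ̃) is commutative transitive: for all a, b, c ∈ Γ with a, b, c ≠ 1, if ab = ba and bc = cb, then ac = ca. -/
open Quaternion Matrix
open scoped Classical

noncomputable section

/-- The set `Γ̃` of integer quaternions with norm `p^r l^s` and the appropriate
parity conditions. -/
def GammaTilde (p l : ℕ) : Set ℍ[ℤ] :=
  {x | (∃ r s : ℕ, Quaternion.normSq x = (p : ℤ) ^ r * (l : ℤ) ^ s) ∧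
       (Quaternion.normSq x % 4 = 1 →
          Odd x.re ∧ Even x.imI ∧ Even x.imJ ∧ Even x.imK) ∧
       (Quaternion.normSq x % 4 = 3 →
          Even x.imI ∧ Odd x.re ∧ Odd x.imJ ∧ Odd x.imK)}

/-- The set `Ã ⊆ Γ̃` of elements of positive real part and norm `p`. -/
def Atilde (p l : ℕ) : Set ℍ[ℤ] :=
  {x | x ∈ GammaTilde p l ∧ 0 < x.re ∧ Quaternion.normSq x = (p : ℤ)}

/-- The set `B̃ ⊆ Γ̃` of elements of positive real part and norm `l`. -/
def Btilde (p l : ℕ) : Set ℍ[ℤ] :=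
  {y | y ∈ GammaTilde p l ∧ 0 < y.re ∧ Quaternion.normSq y = (l : ℤ)}

/-- The projective general linear group `PGL₂(K)`: `GL₂(K)` modulo its center. -/
abbrev PGL2 (K : Type*) [Field K] : Type _ :=
  GL (Fin 2) K ⧸ Subgroup.center (GL (Fin 2) K)

/-- The matrix `M_{c,d}(x)` associated to an integer quaternion `x`. -/
def Mcd {K : Type*} [Field K] (c d : K) (x : ℍ[ℤ]) : Matrix (Fin 2) (Fin 2) K :=
  !![(x.re : K) + (x.imI : K) * c + (x.imK : K) * d,
     -(x.imI : K) * d + (x.imJ : K) + (x.imK : K) * c;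
     -(x.imI : K) * d - (x.imJ : K) + (x.imK : K) * c,
     (x.re : K) - (x.imI : K) * c - (x.imK : K) * d]

lemma det_Mcd {K : Type*} [Field K] {c d : K} (hcd : c ^ 2 + d ^ 2 + 1 = 0)
    (x : ℍ[ℤ]) : (Mcd c d x).det = ((Quaternion.normSq x : ℤ) : K) := by
  rw [Quaternion.normSq_def']
  rw [Mcd, Matrix.det_fin_two_of]
  push_cast
  linear_combination (-(x.imI : K) ^ 2 - (x.imK : K) ^ 2) * hcd

lemma det_Mcd_ne_zero {K : Type*} [Field K] [CharZero K] {c d : K}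
    (hcd : c ^ 2 + d ^ 2 + 1 = 0) {x : ℍ[ℤ]} (hx : x ≠ 0) :
    (Mcd c d x).det ≠ 0 := by
  rw [det_Mcd hcd]
  exact_mod_cast Quaternion.normSq_ne_zero.mpr hx

/-- The image of a nonzero integer quaternion in `GL₂(K)` (junk value `1` at `x = 0`). -/
def psiGL {K : Type*} [Field K] [CharZero K] (c d : K) (hcd : c ^ 2 + d ^ 2 + 1 = 0)
    (x : ℍ[ℤ]) : GL (Fin 2) K :=
  if hx : x = 0 then 1
  else Matrix.GeneralLinearGroup.mkOfDetNeZero (Mcd c d x) (det_Mcd_ne_zero hcd hx)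

variable (p l : ℕ) [Fact p.Prime] [Fact l.Prime]

/-- The map `ψ : ℍ(ℤ) → PGL₂(ℚ_p) × PGL₂(ℚ_l)` (with junk value at `0`). -/
def psi (cp dp : ℚ_[p]) (cl dl : ℚ_[l])
    (hp : cp ^ 2 + dp ^ 2 + 1 = 0) (hl : cl ^ 2 + dl ^ 2 + 1 = 0)
    (x : ℍ[ℤ]) : PGL2 ℚ_[p] × PGL2 ℚ_[l] :=
  (QuotientGroup.mk (psiGL cp dp hp x), QuotientGroup.mk (psiGL cl dl hl x))

/-- The group `Γ = ψ(Γ̃)`, as the subgroup of `PGL₂(ℚ_p) × PGL₂(ℚ_l)` generated by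
the image `ψ(Γ̃)` (this image is itself closed under multiplication and inverses,
so it coincides with the generated subgroup). -/
def Gamma (cp dp : ℚ_[p]) (cl dl : ℚ_[l])
    (hp : cp ^ 2 + dp ^ 2 + 1 = 0) (hl : cl ^ 2 + dl ^ 2 + 1 = 0) :
    Subgroup (PGL2 ℚ_[p] × PGL2 ℚ_[l]) :=
  Subgroup.closure (psi p l cp dp cl dl hp hl '' GammaTilde p l)

/-- The subgroup `Γ_p = ⟨ψ(Ã)⟩`. -/
def GammaP (cp dp : ℚ_[p]) (cl dl : ℚ_[l])
    (hp : cp ^ 2 + dp ^ 2 + 1 = 0) (hl : cl ^ 2 + dl ^ 2 + 1 = 0) :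
    Subgroup (PGL2 ℚ_[p] × PGL2 ℚ_[l]) :=
  Subgroup.closure (psi p l cp dp cl dl hp hl '' Atilde p l)

/-- The subgroup `Γ_l = ⟨ψ(B̃)⟩`. -/
def GammaL (cp dp : ℚ_[p]) (cl dl : ℚ_[l])
    (hp : cp ^ 2 + dp ^ 2 + 1 = 0) (hl : cl ^ 2 + dl ^ 2 + 1 = 0) :
    Subgroup (PGL2 ℚ_[p] × PGL2 ℚ_[l]) :=
  Subgroup.closure (psi p l cp dp cl dl hp hl '' Btilde p l)

section Lemmas
variable {K : Type*} [Field K] [CharZero K] {c d : K}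

lemma Mcd_mul (hcd : c ^ 2 + d ^ 2 + 1 = 0) (x y : ℍ[ℤ]) :
    Mcd c d (x * y) = Mcd c d x * Mcd c d y := by
  ext i j
  fin_cases i <;> fin_cases j <;>
    simp [Mcd, Matrix.mul_apply, Fin.sum_univ_two, Quaternion.re_mul, Quaternion.imI_mul,
      Quaternion.imJ_mul, Quaternion.imK_mul] <;>
    push_cast
  · linear_combination (-((x.imI:K) * y.imI + (x.imK:K) * y.imK)) * hcd
  · linear_combination ((x.imK:K) * y.imI - (x.imI:K) * y.imK) * hcd
  · linear_combination ((x.imI:K) * y.imK - (x.imK:K) * y.imI) * hcd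
  · linear_combination (-((x.imI:K) * y.imI + (x.imK:K) * y.imK)) * hcd

lemma Mcd_neg (x : ℍ[ℤ]) : Mcd c d (-x) = - Mcd c d x := by
  ext i j
  fin_cases i <;> fin_cases j <;> simp [Mcd] <;> push_cast <;> ring

lemma Mcd_inj (hcd : c ^ 2 + d ^ 2 + 1 = 0) {x y : ℍ[ℤ]}
    (h : Mcd c d x = Mcd c d y) : x = y := by
  have h2 : (2:K) ≠ 0 := two_ne_zero
  have h00 := congrFun (congrFun h 0) 0
  have h01 := congrFun (congrFun h 0) 1
  have h10 := congrFun (congrFun h 1) 0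
  have h11 := congrFun (congrFun h 1) 1
  simp [Mcd] at h00 h01 h10 h11
  have hre : (x.re : K) = y.re := mul_left_cancel₀ h2 (by linear_combination h00 + h11)
  have hJ : (x.imJ : K) = y.imJ := mul_left_cancel₀ h2 (by linear_combination h01 - h10)
  have e1 : ((x.imI : K) - y.imI) * c + ((x.imK : K) - y.imK) * d = 0 :=
    mul_left_cancel₀ h2 (by linear_combination h00 - h11)
  have e2 : -((x.imI : K) - y.imI) * d + ((x.imK : K) - y.imK) * c = 0 :=
    mul_left_cancel₀ h2 (by linear_combination h01 + h10)
  have hI : (x.imI : K) = y.imI := by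
    linear_combination (-c) * e1 + d * e2 + ((x.imI:K) - y.imI) * hcd
  have hK : (x.imK : K) = y.imK := by
    linear_combination (-d) * e1 + (-c) * e2 + ((x.imK:K) - y.imK) * hcd
  ext
  · exact_mod_cast hre
  · exact_mod_cast hI
  · exact_mod_cast hJ
  · exact_mod_cast hK

end Lemmas
section Center
variable {K : Type*} [Field K]

lemma mem_center_of_scalar {z : GL (Fin 2) K} {μ : K}
    (h : (z : Matrix (Fin 2) (Fin 2) K) = μ • 1) :
    z ∈ Subgroup.center (GL (Fin 2) K) := by
  rw [Subgroup.mem_center_iff]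
  intro g
  apply Units.ext
  show (g : Matrix (Fin 2) (Fin 2) K) * z = (z : Matrix (Fin 2) (Fin 2) K) * g
  rw [h, Matrix.mul_smul, Matrix.smul_mul, Matrix.mul_one, Matrix.one_mul]

lemma scalar_of_mem_center {z : GL (Fin 2) K}
    (h : z ∈ Subgroup.center (GL (Fin 2) K)) :
    ∃ μ : K, (z : Matrix (Fin 2) (Fin 2) K) = μ • 1 := by
  have hE : (!![1, 1; 0, 1] : Matrix (Fin 2) (Fin 2) K).det ≠ 0 := by
    simp [Matrix.det_fin_two_of]
  have hF : (!![1, 0; 1, 1] : Matrix (Fin 2) (Fin 2) K).det ≠ 0 := by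
    simp [Matrix.det_fin_two_of]
  set E := Matrix.GeneralLinearGroup.mkOfDetNeZero _ hE with hEdef
  set F := Matrix.GeneralLinearGroup.mkOfDetNeZero _ hF with hFdef
  have hcE' : E * z = z * E := by
    have := Subgroup.mem_center_iff.mp h E; exact this.symm ▸ this
  have hcE : (E : Matrix (Fin 2) (Fin 2) K) * (z : Matrix (Fin 2) (Fin 2) K)
      = (z : Matrix (Fin 2) (Fin 2) K) * (E : Matrix (Fin 2) (Fin 2) K) := by
    exact_mod_cast congrArg Units.val (Subgroup.mem_center_iff.mp h E)
  have hcF : (F : Matrix (Fin 2) (Fin 2) K) * (z : Matrix (Fin 2) (Fin 2) K)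
      = (z : Matrix (Fin 2) (Fin 2) K) * (F : Matrix (Fin 2) (Fin 2) K) := by
    exact_mod_cast congrArg Units.val (Subgroup.mem_center_iff.mp h F)
  have hEv : (E : Matrix (Fin 2) (Fin 2) K) = !![1, 1; 0, 1] := rfl
  have hFv : (F : Matrix (Fin 2) (Fin 2) K) = !![1, 0; 1, 1] := rfl
  rw [hEv] at hcE
  rw [hFv] at hcF
  have e00 := congrFun (congrFun hcE 0) 0
  have e01 := congrFun (congrFun hcE 0) 1
  have f00 := congrFun (congrFun hcF 0) 0
  simp [Matrix.mul_apply, Fin.sum_univ_two] at e00 e01 f00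
  refine ⟨(z : Matrix (Fin 2) (Fin 2) K) 0 0, ?_⟩
  ext i j
  fin_cases i <;> fin_cases j <;> simp [Matrix.one_apply]
  · exact f00
  · exact e00
  · linear_combination e01

end Center
section PsiGL
variable {K : Type*} [Field K] [CharZero K] {c d : K}

lemma psiGL_val (hcd : c ^ 2 + d ^ 2 + 1 = 0) {x : ℍ[ℤ]} (hx : x ≠ 0) :
    (psiGL c d hcd x : Matrix (Fin 2) (Fin 2) K) = Mcd c d x := by
  rw [psiGL, dif_neg hx]; rfl

lemma q_mul_ne_zero {x y : ℍ[ℤ]} (hx : x ≠ 0) (hy : y ≠ 0) : x * y ≠ 0 := by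
  intro h0
  have : Quaternion.normSq (x * y) = 0 := by rw [h0]; simp
  rw [_root_.map_mul] at this
  rcases mul_eq_zero.mp this with h | h
  · exact Quaternion.normSq_ne_zero.mpr hx h
  · exact Quaternion.normSq_ne_zero.mpr hy h

lemma psiGL_mul (hcd : c ^ 2 + d ^ 2 + 1 = 0) {x y : ℍ[ℤ]} (hx : x ≠ 0) (hy : y ≠ 0) :
    psiGL c d hcd (x * y) = psiGL c d hcd x * psiGL c d hcd y := by
  apply Units.ext
  rw [Units.val_mul, psiGL_val hcd (q_mul_ne_zero hx hy), psiGL_val hcd hx, psiGL_val hcd hy,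
    Mcd_mul hcd]

lemma Mcd_intCast (n : ℤ) : Mcd c d ((n : ℤ) : ℍ[ℤ]) = (n : K) • (1 : Matrix (Fin 2) (Fin 2) K) := by
  ext i j
  fin_cases i <;> fin_cases j <;> simp [Mcd, Matrix.one_apply]

lemma psiGL_mk_inv (hcd : c ^ 2 + d ^ 2 + 1 = 0) {x : ℍ[ℤ]} (hx : x ≠ 0) :
    (QuotientGroup.mk (psiGL c d hcd x) : PGL2 K)⁻¹
      = QuotientGroup.mk (psiGL c d hcd (star x)) := by
  have hsx : star x ≠ 0 := by simpa using hx
  rw [eq_comm, eq_inv_iff_mul_eq_one]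
  show QuotientGroup.mk (psiGL c d hcd (star x)) * QuotientGroup.mk (psiGL c d hcd x) = 1
  rw [show (QuotientGroup.mk (psiGL c d hcd (star x)) * QuotientGroup.mk (psiGL c d hcd x)
      : PGL2 K) = QuotientGroup.mk (psiGL c d hcd (star x) * psiGL c d hcd x) from rfl,
    QuotientGroup.eq_one_iff]
  apply mem_center_of_scalar (μ := ((Quaternion.normSq x : ℤ) : K))
  rw [Units.val_mul, psiGL_val hcd hsx, psiGL_val hcd hx, ← Mcd_mul hcd,
    Quaternion.star_mul_self]
  exact Mcd_intCast _

lemma psiGL_mk_eq_one (hcd : c ^ 2 + d ^ 2 + 1 = 0) {x : ℍ[ℤ]} (hx : x ≠ 0)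
    (hI : x.imI = 0) (hJ : x.imJ = 0) (hK : x.imK = 0) :
    (QuotientGroup.mk (psiGL c d hcd x) : PGL2 K) = 1 := by
  rw [QuotientGroup.eq_one_iff]
  apply mem_center_of_scalar (μ := ((x.re : ℤ) : K))
  rw [psiGL_val hcd hx]
  have : x = ((x.re : ℤ) : ℍ[ℤ]) := by ext <;> simp [hI, hJ, hK]
  rw [this]
  · exact Mcd_intCast x.re

end PsiGL
section GT
variable {p l : ℕ}

/-- Parity type 1: the parity pattern for norm ≡ 1 mod 4. -/
def PT1 (x : ℍ[ℤ]) : Prop := Odd x.re ∧ Even x.imI ∧ Even x.imJ ∧ Even x.imK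
/-- Parity type 3: the parity pattern for norm ≡ 3 mod 4. -/
def PT3 (x : ℍ[ℤ]) : Prop := Even x.imI ∧ Odd x.re ∧ Odd x.imJ ∧ Odd x.imK

lemma par11 {x y : ℍ[ℤ]} (hx : PT1 x) (hy : PT1 y) : PT1 (x * y) := by
  obtain ⟨a1, a2, a3, a4⟩ := hx; obtain ⟨b1, b2, b3, b4⟩ := hy
  simp only [← Int.not_even_iff_odd] at a1 b1 ⊢
  refine ⟨?_, ?_, ?_, ?_⟩ <;>
    simp [Quaternion.re_mul, Quaternion.imI_mul, Quaternion.imJ_mul, Quaternion.imK_mul,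
      parity_simps, Int.odd_mul, ← Int.not_even_iff_odd] <;> tauto

lemma par13 {x y : ℍ[ℤ]} (hx : PT1 x) (hy : PT3 y) : PT3 (x * y) := by
  obtain ⟨a1, a2, a3, a4⟩ := hx; obtain ⟨b1, b2, b3, b4⟩ := hy
  simp only [← Int.not_even_iff_odd] at a1 b2 b3 b4 ⊢
  refine ⟨?_, ?_, ?_, ?_⟩ <;>
    simp [Quaternion.re_mul, Quaternion.imI_mul, Quaternion.imJ_mul, Quaternion.imK_mul,
      parity_simps, Int.odd_mul, ← Int.not_even_iff_odd] <;> tauto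

lemma par31 {x y : ℍ[ℤ]} (hx : PT3 x) (hy : PT1 y) : PT3 (x * y) := by
  obtain ⟨a1, a2, a3, a4⟩ := hx; obtain ⟨b1, b2, b3, b4⟩ := hy
  simp only [← Int.not_even_iff_odd] at a2 a3 a4 b1 ⊢
  refine ⟨?_, ?_, ?_, ?_⟩ <;>
    simp [Quaternion.re_mul, Quaternion.imI_mul, Quaternion.imJ_mul, Quaternion.imK_mul,
      parity_simps, Int.odd_mul, ← Int.not_even_iff_odd] <;> tauto

lemma par33 {x y : ℍ[ℤ]} (hx : PT3 x) (hy : PT3 y) : PT1 (x * y) := by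
  obtain ⟨a1, a2, a3, a4⟩ := hx; obtain ⟨b1, b2, b3, b4⟩ := hy
  simp only [← Int.not_even_iff_odd] at a2 a3 a4 b2 b3 b4 ⊢
  refine ⟨?_, ?_, ?_, ?_⟩ <;>
    simp [Quaternion.re_mul, Quaternion.imI_mul, Quaternion.imJ_mul, Quaternion.imK_mul,
      parity_simps, Int.odd_mul, ← Int.not_even_iff_odd] <;> tauto

lemma gt_normSq_odd (hp : p ≠ 2) (hl : l ≠ 2) (hpp : p.Prime) (hlp : l.Prime)
    {x : ℍ[ℤ]} (hx : x ∈ GammaTilde p l) : Quaternion.normSq x % 2 = 1 := by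
  obtain ⟨⟨r, s, hrs⟩, -, -⟩ := hx
  have hpo : Odd (p : ℤ) := by exact_mod_cast hpp.odd_of_ne_two hp
  have hlo : Odd (l : ℤ) := by exact_mod_cast hlp.odd_of_ne_two hl
  have hodd : Odd (Quaternion.normSq x) := by
    rw [hrs]; exact (hpo.pow).mul (hlo.pow)
  obtain ⟨k, hk⟩ := hodd
  omega

lemma gt_ne_zero (hpp : p.Prime) (hlp : l.Prime) {x : ℍ[ℤ]}
    (hx : x ∈ GammaTilde p l) : x ≠ 0 := by
  obtain ⟨⟨r, s, hrs⟩, -, -⟩ := hx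
  intro h0
  rw [h0] at hrs
  simp only [map_zero] at hrs
  have hp0 : (0:ℤ) < (p:ℤ) ^ r * (l:ℤ) ^ s := by
    have h1 : 0 < (p:ℤ) := by exact_mod_cast hpp.pos
    have h2 : 0 < (l:ℤ) := by exact_mod_cast hlp.pos
    positivity
  omega

lemma gt_re_odd (hp : p ≠ 2) (hl : l ≠ 2) (hpp : p.Prime) (hlp : l.Prime)
    {x : ℍ[ℤ]} (hx : x ∈ GammaTilde p l) : Odd x.re := by
  have h2 := gt_normSq_odd hp hl hpp hlp hx
  obtain ⟨-, h1, h3⟩ := hx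
  have : Quaternion.normSq x % 4 = 1 ∨ Quaternion.normSq x % 4 = 3 := by omega
  rcases this with h | h
  · exact (h1 h).1
  · exact (h3 h).2.1

lemma gt_one_mem : (1 : ℍ[ℤ]) ∈ GammaTilde p l := by
  refine ⟨⟨0, 0, by simp⟩, ?_, ?_⟩ <;> intro h <;> simp_all

lemma gt_star_mem {x : ℍ[ℤ]} (hx : x ∈ GammaTilde p l) : star x ∈ GammaTilde p l := by
  obtain ⟨⟨r, s, hrs⟩, h1, h3⟩ := hx
  refine ⟨⟨r, s, by rwa [Quaternion.normSq_star]⟩, ?_, ?_⟩ <;>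
    rw [Quaternion.normSq_star] <;> intro h <;>
    simp only [Quaternion.re_star, Quaternion.imI_star, Quaternion.imJ_star,
      Quaternion.imK_star, even_neg, odd_neg]
  · exact h1 h
  · exact h3 h

lemma gt_mul_mem (hp : p ≠ 2) (hl : l ≠ 2) (hpp : p.Prime) (hlp : l.Prime)
    {x y : ℍ[ℤ]} (hx : x ∈ GammaTilde p l) (hy : y ∈ GammaTilde p l) :
    x * y ∈ GammaTilde p l := by
  have hxo := gt_normSq_odd hp hl hpp hlp hx
  have hyo := gt_normSq_odd hp hl hpp hlp hy
  obtain ⟨⟨r, s, hrs⟩, hx1, hx3⟩ := hx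
  obtain ⟨⟨r', s', hrs'⟩, hy1, hy3⟩ := hy
  have hmul : Quaternion.normSq (x * y) = Quaternion.normSq x * Quaternion.normSq y :=
    _root_.map_mul _ _ _
  have hx4 : Quaternion.normSq x % 4 = 1 ∨ Quaternion.normSq x % 4 = 3 := by omega
  have hy4 : Quaternion.normSq y % 4 = 1 ∨ Quaternion.normSq y % 4 = 3 := by omega
  refine ⟨⟨r + r', s + s', by rw [hmul, hrs, hrs']; ring⟩, ?_, ?_⟩ <;>
      intro h <;> rw [hmul, Int.mul_emod] at h <;>
      rcases hx4 with h4 | h4 <;> rcases hy4 with h5 | h5 <;>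
      rw [h4, h5] at h <;> norm_num at h
  · exact par11 (hx1 h4) (hy1 h5)
  · exact par33 (hx3 h4) (hy3 h5)
  · exact par13 (hx1 h4) (hy3 h5)
  · exact par31 (hx3 h4) (hy1 h5)

end GT
section Anti

lemma odd_ne_zero {n : ℤ} (h : Odd n) : n ≠ 0 := by
  obtain ⟨k, hk⟩ := h; omega

lemma no_anticommute {x y : ℍ[ℤ]} (hx : Odd x.re) (hy : Odd y.re)
    (h : x * y = -(y * x)) : False := by
  have h0 := congrArg QuaternionAlgebra.re h
  have h1 := congrArg QuaternionAlgebra.imI h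
  have h2 := congrArg QuaternionAlgebra.imJ h
  have h3 := congrArg QuaternionAlgebra.imK h
  simp only [Quaternion.re_mul, Quaternion.imI_mul, Quaternion.imJ_mul, Quaternion.imK_mul,
    Quaternion.re_neg, Quaternion.imI_neg, Quaternion.imJ_neg, Quaternion.imK_neg]
    at h0 h1 h2 h3
  have key2 : (2:ℤ) * (x.re * (y.re^2 + y.imI^2 + y.imJ^2 + y.imK^2)) = 0 := by
    linear_combination y.re * h0 + y.imI * h1 + y.imJ * h2 + y.imK * h3
  have key : x.re * (y.re^2 + y.imI^2 + y.imJ^2 + y.imK^2) = 0 := by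
    rcases mul_eq_zero.mp key2 with h' | h'
    · exact absurd h' (by norm_num)
    · exact h'
  rcases mul_eq_zero.mp key with h' | h'
  · exact odd_ne_zero hx h'
  · have hy0 : y.re = 0 := by
      nlinarith [sq_nonneg y.re, sq_nonneg y.imI, sq_nonneg y.imJ, sq_nonneg y.imK]
    exact odd_ne_zero hy hy0

lemma cross_trans {u1 u2 u3 v1 v2 v3 w1 w2 w3 : ℤ}
    (hv : ¬(v1 = 0 ∧ v2 = 0 ∧ v3 = 0))
    (huv1 : u2*v3 = u3*v2) (huv2 : u3*v1 = u1*v3) (huv3 : u1*v2 = u2*v1)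
    (hwv1 : w2*v3 = w3*v2) (hwv2 : w3*v1 = w1*v3) (hwv3 : w1*v2 = w2*v1) :
    u2*w3 = u3*w2 ∧ u3*w1 = u1*w3 ∧ u1*w2 = u2*w1 := by
  have c1 : v2*w3 - v3*w2 = 0 := by linear_combination -hwv1
  have c2 : v3*w1 - v1*w3 = 0 := by linear_combination -hwv2
  have c3 : v1*w2 - v2*w1 = 0 := by linear_combination -hwv3
  by_cases h1 : v1 = 0
  · by_cases h2 : v2 = 0
    · have h3 : v3 ≠ 0 := fun h3 => hv ⟨h1, h2, h3⟩
      refine ⟨mul_left_cancel₀ h3 ?_, mul_left_cancel₀ h3 ?_, mul_left_cancel₀ h3 ?_⟩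
      · linear_combination u3*c1 + w3*huv1
      · linear_combination u3*c2 + w3*huv2
      · linear_combination u3*c3 - w1*huv1 - w2*huv2
    · refine ⟨mul_left_cancel₀ h2 ?_, mul_left_cancel₀ h2 ?_, mul_left_cancel₀ h2 ?_⟩
      · linear_combination u2*c1 + w2*huv1
      · linear_combination u2*c2 - w1*huv1 - w3*huv3
      · linear_combination u2*c3 + w2*huv3
  · refine ⟨mul_left_cancel₀ h1 ?_, mul_left_cancel₀ h1 ?_, mul_left_cancel₀ h1 ?_⟩
    · linear_combination u1*c1 - w3*huv3 - w2*huv2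
    · linear_combination u1*c2 + w1*huv2
    · linear_combination u1*c3 + w1*huv3

end Anti
section CommChar
variable {K : Type*} [Field K] [CharZero K] {c d : K}

lemma comm_of_pgl_comm (hcd : c ^ 2 + d ^ 2 + 1 = 0) {x y : ℍ[ℤ]}
    (hx0 : x ≠ 0) (hy0 : y ≠ 0) (hxre : Odd x.re) (hyre : Odd y.re)
    (h : (QuotientGroup.mk (psiGL c d hcd x) : PGL2 K) * QuotientGroup.mk (psiGL c d hcd y)
       = QuotientGroup.mk (psiGL c d hcd y) * QuotientGroup.mk (psiGL c d hcd x)) :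
    x * y = y * x := by
  have hxy0 : x * y ≠ 0 := q_mul_ne_zero hx0 hy0
  have hyx0 : y * x ≠ 0 := q_mul_ne_zero hy0 hx0
  rw [show ((QuotientGroup.mk (psiGL c d hcd x) : PGL2 K) * QuotientGroup.mk (psiGL c d hcd y))
      = QuotientGroup.mk (psiGL c d hcd x * psiGL c d hcd y) from rfl,
    show ((QuotientGroup.mk (psiGL c d hcd y) : PGL2 K) * QuotientGroup.mk (psiGL c d hcd x))
      = QuotientGroup.mk (psiGL c d hcd y * psiGL c d hcd x) from rfl,
    QuotientGroup.eq] at h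
  obtain ⟨μ, hμ⟩ := scalar_of_mem_center h
  have hval : Mcd c d (y * x) = μ • Mcd c d (x * y) := by
    have key : ((psiGL c d hcd x * psiGL c d hcd y : GL (Fin 2) K) : Matrix (Fin 2) (Fin 2) K)
        * (((psiGL c d hcd x * psiGL c d hcd y)⁻¹ * (psiGL c d hcd y * psiGL c d hcd x) :
          GL (Fin 2) K) : Matrix (Fin 2) (Fin 2) K)
        = ((psiGL c d hcd y * psiGL c d hcd x : GL (Fin 2) K) : Matrix (Fin 2) (Fin 2) K) := by
      rw [← Units.val_mul, mul_inv_cancel_left]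
    rw [hμ] at key
    calc Mcd c d (y * x)
        = ((psiGL c d hcd y * psiGL c d hcd x : GL (Fin 2) K) : Matrix (Fin 2) (Fin 2) K) := by
          rw [Units.val_mul, psiGL_val hcd hy0, psiGL_val hcd hx0, ← Mcd_mul hcd]
      _ = ((psiGL c d hcd x * psiGL c d hcd y : GL (Fin 2) K) : Matrix (Fin 2) (Fin 2) K)
          * (μ • 1) := key.symm
      _ = μ • Mcd c d (x * y) := by
          rw [Units.val_mul, psiGL_val hcd hx0, psiGL_val hcd hy0, ← Mcd_mul hcd,
            Matrix.mul_smul, Matrix.mul_one]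
  have hN0 : ((Quaternion.normSq (x * y) : ℤ) : K) ≠ 0 := by
    exact_mod_cast Quaternion.normSq_ne_zero.mpr hxy0
  have hmu2 : μ ^ 2 = 1 := by
    have hd := congrArg Matrix.det hval
    rw [Matrix.det_smul, det_Mcd hcd, det_Mcd hcd] at hd
    have hNeq : Quaternion.normSq (y * x) = Quaternion.normSq (x * y) := by
      rw [_root_.map_mul, _root_.map_mul, mul_comm]
    rw [hNeq] at hd
    have hcard : Fintype.card (Fin 2) = 2 := by simp
    rw [hcard] at hd
    have := mul_right_cancel₀ hN0 (by linear_combination hd :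
      (1 : K) * ((Quaternion.normSq (x * y) : ℤ) : K)
        = μ ^ 2 * ((Quaternion.normSq (x * y) : ℤ) : K))
    exact this.symm
  have hcases : μ = 1 ∨ μ = -1 := by
    have hfac : (μ - 1) * (μ + 1) = 0 := by linear_combination hmu2
    rcases mul_eq_zero.mp hfac with h' | h'
    · left; linear_combination h'
    · right; linear_combination h'
  rcases hcases with h' | h'
  · rw [h', one_smul] at hval
    exact (Mcd_inj hcd hval).symm
  · rw [h', neg_smul, one_smul, ← Mcd_neg] at hval
    have hanti : y * x = -(x * y) := Mcd_inj hcd hval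
    exact absurd hanti (fun hh => no_anticommute hyre hxre hh)

end CommChar
section Main
variable {p l : ℕ} [Fact p.Prime] [Fact l.Prime]
variable {cp dp : ℚ_[p]} {cl dl : ℚ_[l]}

lemma psi_mul (hp : cp ^ 2 + dp ^ 2 + 1 = 0) (hl : cl ^ 2 + dl ^ 2 + 1 = 0)
    {x y : ℍ[ℤ]} (hx : x ≠ 0) (hy : y ≠ 0) :
    psi p l cp dp cl dl hp hl (x * y)
      = psi p l cp dp cl dl hp hl x * psi p l cp dp cl dl hp hl y := by
  unfold psi
  refine Prod.ext ?_ ?_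
  · show (QuotientGroup.mk (psiGL cp dp hp (x * y)) : PGL2 ℚ_[p]) = _
    rw [psiGL_mul hp hx hy]; rfl
  · show (QuotientGroup.mk (psiGL cl dl hl (x * y)) : PGL2 ℚ_[l]) = _
    rw [psiGL_mul hl hx hy]; rfl

lemma psi_one (hp : cp ^ 2 + dp ^ 2 + 1 = 0) (hl : cl ^ 2 + dl ^ 2 + 1 = 0) :
    psi p l cp dp cl dl hp hl 1 = 1 := by
  unfold psi
  refine Prod.ext ?_ ?_
  · exact psiGL_mk_eq_one hp one_ne_zero (by simp) (by simp) (by simp)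
  · exact psiGL_mk_eq_one hl one_ne_zero (by simp) (by simp) (by simp)

lemma psi_inv (hp : cp ^ 2 + dp ^ 2 + 1 = 0) (hl : cl ^ 2 + dl ^ 2 + 1 = 0)
    {x : ℍ[ℤ]} (hx : x ≠ 0) :
    (psi p l cp dp cl dl hp hl x)⁻¹ = psi p l cp dp cl dl hp hl (star x) := by
  unfold psi
  refine Prod.ext ?_ ?_
  · exact psiGL_mk_inv hp hx
  · exact psiGL_mk_inv hl hx

lemma gamma_rep (hp2 : p ≠ 2) (hl2 : l ≠ 2)
    (hp : cp ^ 2 + dp ^ 2 + 1 = 0) (hl : cl ^ 2 + dl ^ 2 + 1 = 0)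
    {g : PGL2 ℚ_[p] × PGL2 ℚ_[l]} (hg : g ∈ Gamma p l cp dp cl dl hp hl) :
    ∃ x ∈ GammaTilde p l, g = psi p l cp dp cl dl hp hl x := by
  have hppr : p.Prime := Fact.out
  have hlpr : l.Prime := Fact.out
  induction hg using Subgroup.closure_induction with
  | mem g hgm => obtain ⟨x, hx, rfl⟩ := hgm; exact ⟨x, hx, rfl⟩
  | one => exact ⟨1, gt_one_mem, (psi_one hp hl).symm⟩
  | mul a b ha hb iha ihb =>
      obtain ⟨x, hx, rfl⟩ := iha
      obtain ⟨y, hy, rfl⟩ := ihb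
      exact ⟨x * y, gt_mul_mem hp2 hl2 hppr hlpr hx hy,
        (psi_mul hp hl (gt_ne_zero hppr hlpr hx) (gt_ne_zero hppr hlpr hy)).symm⟩
  | inv a ha iha =>
      obtain ⟨x, hx, rfl⟩ := iha
      exact ⟨star x, gt_star_mem hx, psi_inv hp hl (gt_ne_zero hppr hlpr hx)⟩

end Main
/-- Proposition 2: `Γ` is commutative transitive. -/
theorem gamma_commutative_transitive (p l : ℕ) [Fact p.Prime] [Fact l.Prime]
    (hp2 : p ≠ 2) (hl2 : l ≠ 2) (hpl : p ≠ l)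
    (cp dp : ℚ_[p]) (cl dl : ℚ_[l])
    (hcp : cp ^ 2 + dp ^ 2 + 1 = 0) (hcl : cl ^ 2 + dl ^ 2 + 1 = 0)
    (a b c : PGL2 ℚ_[p] × PGL2 ℚ_[l])
    (ha : a ∈ Gamma p l cp dp cl dl hcp hcl) (hb : b ∈ Gamma p l cp dp cl dl hcp hcl)
    (hc : c ∈ Gamma p l cp dp cl dl hcp hcl)
    (ha1 : a ≠ 1) (hb1 : b ≠ 1) (hc1 : c ≠ 1)
    (hab : a * b = b * a) (hbc : b * c = c * b) :
    a * c = c * a := by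
  have hppr : p.Prime := Fact.out
  have hlpr : l.Prime := Fact.out
  obtain ⟨x, hxG, rfl⟩ := gamma_rep hp2 hl2 hcp hcl ha
  obtain ⟨y, hyG, rfl⟩ := gamma_rep hp2 hl2 hcp hcl hb
  obtain ⟨z, hzG, rfl⟩ := gamma_rep hp2 hl2 hcp hcl hc
  have hx0 := gt_ne_zero hppr hlpr hxG
  have hy0 := gt_ne_zero hppr hlpr hyG
  have hz0 := gt_ne_zero hppr hlpr hzG
  have hxre := gt_re_odd hp2 hl2 hppr hlpr hxG
  have hyre := gt_re_odd hp2 hl2 hppr hlpr hyG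
  have hzre := gt_re_odd hp2 hl2 hppr hlpr hzG
  have h1 : (QuotientGroup.mk (psiGL cp dp hcp x) : PGL2 ℚ_[p])
      * QuotientGroup.mk (psiGL cp dp hcp y)
      = QuotientGroup.mk (psiGL cp dp hcp y) * QuotientGroup.mk (psiGL cp dp hcp x) :=
    congrArg Prod.fst hab
  have h2 : (QuotientGroup.mk (psiGL cp dp hcp y) : PGL2 ℚ_[p])
      * QuotientGroup.mk (psiGL cp dp hcp z)
      = QuotientGroup.mk (psiGL cp dp hcp z) * QuotientGroup.mk (psiGL cp dp hcp y) :=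
    congrArg Prod.fst hbc
  have hxy : x * y = y * x := comm_of_pgl_comm hcp hx0 hy0 hxre hyre h1
  have hyz : y * z = z * y := comm_of_pgl_comm hcp hy0 hz0 hyre hzre h2
  have hyim : ¬(y.imI = 0 ∧ y.imJ = 0 ∧ y.imK = 0) := by
    rintro ⟨hI, hJ, hK⟩
    apply hb1
    refine Prod.ext ?_ ?_
    · exact psiGL_mk_eq_one hcp hy0 hI hJ hK
    · exact psiGL_mk_eq_one hcl hy0 hI hJ hK
  have h2Z : (2:ℤ) ≠ 0 := by norm_num
  have e1 : x.imJ * y.imK = x.imK * y.imJ := by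
    have hh := congrArg QuaternionAlgebra.imI hxy
    simp only [Quaternion.imI_mul] at hh
    exact mul_left_cancel₀ h2Z (by linear_combination hh)
  have e2 : x.imK * y.imI = x.imI * y.imK := by
    have hh := congrArg QuaternionAlgebra.imJ hxy
    simp only [Quaternion.imJ_mul] at hh
    exact mul_left_cancel₀ h2Z (by linear_combination hh)
  have e3 : x.imI * y.imJ = x.imJ * y.imI := by
    have hh := congrArg QuaternionAlgebra.imK hxy
    simp only [Quaternion.imK_mul] at hh
    exact mul_left_cancel₀ h2Z (by linear_combination hh)
  have f1 : z.imJ * y.imK = z.imK * y.imJ := by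
    have hh := congrArg QuaternionAlgebra.imI hyz
    simp only [Quaternion.imI_mul] at hh
    exact mul_left_cancel₀ h2Z (by linear_combination -hh)
  have f2 : z.imK * y.imI = z.imI * y.imK := by
    have hh := congrArg QuaternionAlgebra.imJ hyz
    simp only [Quaternion.imJ_mul] at hh
    exact mul_left_cancel₀ h2Z (by linear_combination -hh)
  have f3 : z.imI * y.imJ = z.imJ * y.imI := by
    have hh := congrArg QuaternionAlgebra.imK hyz
    simp only [Quaternion.imK_mul] at hh
    exact mul_left_cancel₀ h2Z (by linear_combination -hh)
  obtain ⟨g1, g2, g3⟩ := cross_trans hyim e1 e2 e3 f1 f2 f3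
  have hxz : x * z = z * x := by
    ext
    · simp only [Quaternion.re_mul]; ring
    · simp only [Quaternion.imI_mul]; linear_combination 2 * g1
    · simp only [Quaternion.imJ_mul]; linear_combination 2 * g2
    · simp only [Quaternion.imK_mul]; linear_combination 2 * g3
  rw [← psi_mul hcp hcl hx0 hz0, ← psi_mul hcp hcl hz0 hx0, hxz]
end
end

section
/- Let p and l be distinct odd primes and let a, b ∈ Γ = ψ(Γ̃). Then bab⁻¹ commutes with a if and only if b commutes with a. -/
open Quaternion Matrix
open scoped Classical

noncomputable section

variable (p l : ℕ) [Fact p.Prime] [Fact l.Prime]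

/-! ### Auxiliary lemmas -/

section AuxLemmas

/-- Parity transfer to `ZMod 2`. -/
lemma aux_even_iff_zmod (n : ℤ) : Even n ↔ (n : ZMod 2) = 0 := by
  constructor
  · intro h; rw [ZMod.intCast_zmod_eq_zero_iff_dvd]; exact_mod_cast h.two_dvd
  · intro h; rw [ZMod.intCast_zmod_eq_zero_iff_dvd] at h
    exact even_iff_two_dvd.mpr (by exact_mod_cast h)

lemma aux_odd_iff_zmod (n : ℤ) : Odd n ↔ (n : ZMod 2) = 1 := by
  rw [← Int.not_even_iff_odd, aux_even_iff_zmod]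
  generalize (n : ZMod 2) = x; revert x; decide

/-- An element of `Γ̃` is nonzero. -/
lemma aux_mem_ne_zero {p l : ℕ} (hp : p ≠ 0) (hl : l ≠ 0) {x : ℍ[ℤ]}
    (hx : x ∈ GammaTilde p l) : x ≠ 0 := by
  obtain ⟨⟨r, s, hrs⟩, -, -⟩ := hx
  refine Quaternion.normSq_ne_zero.mp ?_
  rw [hrs]
  have hp' : (p : ℤ) ≠ 0 := Int.natCast_ne_zero.mpr hp
  have hl' : (l : ℤ) ≠ 0 := Int.natCast_ne_zero.mpr hl
  exact mul_ne_zero (pow_ne_zero _ hp') (pow_ne_zero _ hl')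

/-- The norm of an element of `Γ̃` is odd. -/
lemma aux_mem_odd_normSq {p l : ℕ} (hp : Odd p) (hl : Odd l) {x : ℍ[ℤ]}
    (hx : x ∈ GammaTilde p l) : Odd (Quaternion.normSq x) := by
  obtain ⟨⟨r, s, hrs⟩, -, -⟩ := hx
  rw [hrs]
  have hp' : Odd (p : ℤ) := by exact_mod_cast hp
  have hl' : Odd (l : ℤ) := by exact_mod_cast hl
  exact (hp'.pow).mul (hl'.pow)

/-- Every element of `Γ̃` has odd real part. -/
lemma aux_mem_odd_re {p l : ℕ} (hp : Odd p) (hl : Odd l) {x : ℍ[ℤ]}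
    (hx : x ∈ GammaTilde p l) : Odd x.re := by
  have hodd := aux_mem_odd_normSq hp hl hx
  rw [Int.odd_iff] at hodd
  have h4 : Quaternion.normSq x % 4 = 1 ∨ Quaternion.normSq x % 4 = 3 := by omega
  rcases h4 with h | h
  · exact (hx.2.1 h).1
  · exact (hx.2.2 h).2.1

/-- `1 ∈ Γ̃`. -/
lemma aux_one_mem {p l : ℕ} : (1 : ℍ[ℤ]) ∈ GammaTilde p l := by
  refine ⟨⟨0, 0, by simp⟩, ?_, ?_⟩ <;> intro h <;> simp_all <;> omega

/-- `Γ̃` is closed under `star`. -/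
lemma aux_star_mem {p l : ℕ} {x : ℍ[ℤ]} (hx : x ∈ GammaTilde p l) :
    star x ∈ GammaTilde p l := by
  obtain ⟨⟨r, s, hrs⟩, h1, h3⟩ := hx
  have hn : Quaternion.normSq (star x) = Quaternion.normSq x := Quaternion.normSq_star x
  refine ⟨⟨r, s, by rw [hn, hrs]⟩, ?_, ?_⟩ <;> rw [hn] <;> intro h <;>
    simp only [Quaternion.re_star, Quaternion.imI_star, Quaternion.imJ_star,
      Quaternion.imK_star, even_neg, odd_neg]
  · exact h1 h
  · exact h3 h

/-- `Γ̃` is closed under multiplication. -/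
lemma aux_mul_mem {p l : ℕ} (hp : Odd p) (hl : Odd l) {x y : ℍ[ℤ]}
    (hx : x ∈ GammaTilde p l) (hy : y ∈ GammaTilde p l) :
    x * y ∈ GammaTilde p l := by
  have hnx := aux_mem_odd_normSq hp hl hx
  have hny := aux_mem_odd_normSq hp hl hy
  rw [Int.odd_iff] at hnx hny
  have hnmul : Quaternion.normSq (x * y)
      = Quaternion.normSq x * Quaternion.normSq y := map_mul _ _ _
  obtain ⟨⟨r, s, hrs⟩, hx1, hx3⟩ := hx
  obtain ⟨⟨r', s', hrs'⟩, hy1, hy3⟩ := hy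
  refine ⟨⟨r + r', s + s', by rw [hnmul, hrs, hrs']; ring⟩, ?_, ?_⟩
  · intro hm
    have hx4 : Quaternion.normSq x % 4 = 1 ∨ Quaternion.normSq x % 4 = 3 := by omega
    have hy4 : Quaternion.normSq y % 4 = 1 ∨ Quaternion.normSq y % 4 = 3 := by omega
    rw [hnmul, Int.mul_emod] at hm
    rcases hx4 with hx4 | hx4 <;> rcases hy4 with hy4 | hy4 <;>
      rw [hx4, hy4] at hm <;> norm_num at hm
    · obtain ⟨a1, a2, a3, a4⟩ := hx1 hx4
      obtain ⟨b1, b2, b3, b4⟩ := hy1 hy4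
      simp only [aux_odd_iff_zmod, aux_even_iff_zmod] at a1 a2 a3 a4 b1 b2 b3 b4 ⊢
      refine ⟨?_, ?_, ?_, ?_⟩ <;>
        simp only [Quaternion.re_mul, Quaternion.imI_mul, Quaternion.imJ_mul,
          Quaternion.imK_mul] <;>
        push_cast <;> simp only [a1, a2, a3, a4, b1, b2, b3, b4] <;> decide
    · obtain ⟨a2, a1, a3, a4⟩ := hx3 hx4
      obtain ⟨b2, b1, b3, b4⟩ := hy3 hy4
      simp only [aux_odd_iff_zmod, aux_even_iff_zmod] at a1 a2 a3 a4 b1 b2 b3 b4 ⊢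
      refine ⟨?_, ?_, ?_, ?_⟩ <;>
        simp only [Quaternion.re_mul, Quaternion.imI_mul, Quaternion.imJ_mul,
          Quaternion.imK_mul] <;>
        push_cast <;> simp only [a1, a2, a3, a4, b1, b2, b3, b4] <;> decide
  · intro hm
    have hx4 : Quaternion.normSq x % 4 = 1 ∨ Quaternion.normSq x % 4 = 3 := by omega
    have hy4 : Quaternion.normSq y % 4 = 1 ∨ Quaternion.normSq y % 4 = 3 := by omega
    rw [hnmul, Int.mul_emod] at hm
    rcases hx4 with hx4 | hx4 <;> rcases hy4 with hy4 | hy4 <;>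
      rw [hx4, hy4] at hm <;> norm_num at hm
    · obtain ⟨a1, a2, a3, a4⟩ := hx1 hx4
      obtain ⟨b2, b1, b3, b4⟩ := hy3 hy4
      simp only [aux_odd_iff_zmod, aux_even_iff_zmod] at a1 a2 a3 a4 b1 b2 b3 b4 ⊢
      refine ⟨?_, ?_, ?_, ?_⟩ <;>
        simp only [Quaternion.re_mul, Quaternion.imI_mul, Quaternion.imJ_mul,
          Quaternion.imK_mul] <;>
        push_cast <;> simp only [a1, a2, a3, a4, b1, b2, b3, b4] <;> decide
    · obtain ⟨a2, a1, a3, a4⟩ := hx3 hx4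
      obtain ⟨b1, b2, b3, b4⟩ := hy1 hy4
      simp only [aux_odd_iff_zmod, aux_even_iff_zmod] at a1 a2 a3 a4 b1 b2 b3 b4 ⊢
      refine ⟨?_, ?_, ?_, ?_⟩ <;>
        simp only [Quaternion.re_mul, Quaternion.imI_mul, Quaternion.imJ_mul,
          Quaternion.imK_mul] <;>
        push_cast <;> simp only [a1, a2, a3, a4, b1, b2, b3, b4] <;> decide

end AuxLemmas
section AuxGL

/-- Equality of 2×2 matrix literals from entrywise equality. -/
lemma aux_eq_fin_two {α : Type*} {a b c d e f g h : α}
    (h1 : a = e) (h2 : b = f) (h3 : c = g) (h4 : d = h) :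
    !![a, b; c, d] = !![e, f; g, h] := by rw [h1, h2, h3, h4]

variable {K : Type*} [Field K] [CharZero K]

/-- Scalar 2×2 matrices are central. -/
lemma aux_scalar_comm (t : K) (M : Matrix (Fin 2) (Fin 2) K) :
    !![t, 0; 0, t] * M = M * !![t, 0; 0, t] := by
  rw [Matrix.eta_fin_two M, Matrix.mul_fin_two, Matrix.mul_fin_two]
  exact aux_eq_fin_two (by ring) (by ring) (by ring) (by ring)

/-- `Mcd` is multiplicative. -/
lemma aux_Mcd_mul {c d : K} (hcd : c ^ 2 + d ^ 2 + 1 = 0) (x y : ℍ[ℤ]) :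
    Mcd c d (x * y) = Mcd c d x * Mcd c d y := by
  rw [Mcd, Mcd, Mcd, Matrix.mul_fin_two]
  refine aux_eq_fin_two ?_ ?_ ?_ ?_ <;>
    simp only [Quaternion.re_mul, Quaternion.imI_mul, Quaternion.imJ_mul,
      Quaternion.imK_mul] <;> push_cast
  · linear_combination (-(x.imK : K) * y.imK - (x.imI : K) * y.imI) * hcd
  · linear_combination ((x.imK : K) * y.imI - (x.imI : K) * y.imK) * hcd
  · linear_combination (-(x.imK : K) * y.imI + (x.imI : K) * y.imK) * hcd
  · linear_combination (-(x.imK : K) * y.imK - (x.imI : K) * y.imI) * hcd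

lemma aux_psiGL_val {c d : K} (hcd : c ^ 2 + d ^ 2 + 1 = 0) {x : ℍ[ℤ]} (hx : x ≠ 0) :
    ((psiGL c d hcd x : GL (Fin 2) K) : Matrix (Fin 2) (Fin 2) K) = Mcd c d x := by
  rw [psiGL, dif_neg hx]; rfl

lemma aux_psiGL_mul {c d : K} (hcd : c ^ 2 + d ^ 2 + 1 = 0) {x y : ℍ[ℤ]}
    (hx : x ≠ 0) (hy : y ≠ 0) :
    psiGL c d hcd (x * y) = psiGL c d hcd x * psiGL c d hcd y := by
  have hxy : x * y ≠ 0 := by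
    refine Quaternion.normSq_ne_zero.mp ?_
    rw [_root_.map_mul]
    exact mul_ne_zero (Quaternion.normSq_ne_zero.mpr hx) (Quaternion.normSq_ne_zero.mpr hy)
  apply Units.ext
  rw [Units.val_mul, aux_psiGL_val hcd hxy, aux_psiGL_val hcd hx, aux_psiGL_val hcd hy]
  exact aux_Mcd_mul hcd x y

lemma aux_psiGL_one {c d : K} (hcd : c ^ 2 + d ^ 2 + 1 = 0) :
    psiGL c d hcd 1 = 1 := by
  apply Units.ext
  rw [aux_psiGL_val hcd one_ne_zero, Units.val_one, Mcd, Matrix.one_fin_two]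
  exact aux_eq_fin_two (by simp) (by simp) (by simp) (by simp)

/-- The image of an integer scalar is a scalar matrix. -/
lemma aux_Mcd_intCast (c d : K) (n : ℤ) :
    Mcd c d (n : ℍ[ℤ]) = !![(n : K), 0; 0, (n : K)] := by
  rw [Mcd]
  exact aux_eq_fin_two (by simp) (by simp) (by simp) (by simp)

/-- The class of `ψGL` of an integer scalar is trivial in `PGL₂`. -/
lemma aux_mk_psiGL_intCast {c d : K} (hcd : c ^ 2 + d ^ 2 + 1 = 0) {n : ℤ} (hn : n ≠ 0) :
    (QuotientGroup.mk (psiGL c d hcd (n : ℍ[ℤ])) : PGL2 K) = 1 := by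
  have hn' : (n : ℍ[ℤ]) ≠ 0 := by
    intro h
    exact hn (by simpa using congrArg QuaternionAlgebra.re h)
  rw [QuotientGroup.eq_one_iff]
  rw [Subgroup.mem_center_iff]
  intro g
  apply Units.ext
  rw [Units.val_mul, Units.val_mul, aux_psiGL_val hcd hn', aux_Mcd_intCast]
  exact (aux_scalar_comm _ _).symm

lemma aux_mk_psiGL_star {c d : K} (hcd : c ^ 2 + d ^ 2 + 1 = 0) {y : ℍ[ℤ]} (hy : y ≠ 0) :
    (QuotientGroup.mk (psiGL c d hcd (star y)) : PGL2 K)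
      = (QuotientGroup.mk (psiGL c d hcd y) : PGL2 K)⁻¹ := by
  have hsy : star y ≠ 0 := star_ne_zero.mpr hy
  refine eq_inv_of_mul_eq_one_left ?_
  rw [← QuotientGroup.mk_mul, ← aux_psiGL_mul hcd hsy hy, Quaternion.star_mul_self]
  exact aux_mk_psiGL_intCast hcd (Quaternion.normSq_ne_zero.mpr hy)

/-- Elements of the center of `GL₂` are scalar matrices. -/
lemma aux_center_scalar {g : GL (Fin 2) K} (hg : g ∈ Subgroup.center (GL (Fin 2) K)) :
    ∃ t : K, (g : Matrix (Fin 2) (Fin 2) K) = !![t, 0; 0, t] := by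
  rw [Subgroup.mem_center_iff] at hg
  obtain ⟨M, hM⟩ : ∃ M, (g : Matrix (Fin 2) (Fin 2) K) = M := ⟨_, rfl⟩
  have hE1 : (!![1, 1; 0, 1] : Matrix (Fin 2) (Fin 2) K) * M = M * !![1, 1; 0, 1] := by
    have := hg ⟨!![1, 1; 0, 1], !![1, -1; 0, 1],
      by rw [Matrix.mul_fin_two, Matrix.one_fin_two]; norm_num,
      by rw [Matrix.mul_fin_two, Matrix.one_fin_two]; norm_num⟩
    have h' := congrArg Units.val this
    rw [Units.val_mul, Units.val_mul, hM] at h'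
    exact h'
  have hE2 : (!![1, 0; 1, 1] : Matrix (Fin 2) (Fin 2) K) * M = M * !![1, 0; 1, 1] := by
    have := hg ⟨!![1, 0; 1, 1], !![1, 0; -1, 1],
      by rw [Matrix.mul_fin_two, Matrix.one_fin_two]; norm_num,
      by rw [Matrix.mul_fin_two, Matrix.one_fin_two]; norm_num⟩
    have h' := congrArg Units.val this
    rw [Units.val_mul, Units.val_mul, hM] at h'
    exact h'
  have e1 := congrFun (congrFun hE1 0) 0
  have e2 := congrFun (congrFun hE1 0) 1
  have e3 := congrFun (congrFun hE2 1) 1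
  simp only [Matrix.mul_apply, Fin.sum_univ_two, Matrix.cons_val_zero, Matrix.cons_val_one,
    Matrix.head_cons, Matrix.of_apply, Matrix.cons_val', Matrix.head_fin_const,
    Matrix.empty_val', Matrix.cons_val_fin_one, one_mul, zero_mul, mul_one, mul_zero,
    add_zero, zero_add] at e1 e2 e3
  refine ⟨M 0 0, ?_⟩
  rw [hM]
  have h10 : M 1 0 = 0 := by linear_combination e1
  have h01 : M 0 1 = 0 := by linear_combination e3
  have h11 : M 1 1 = M 0 0 := by linear_combination e2
  conv_lhs => rw [Matrix.eta_fin_two M]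
  exact aux_eq_fin_two rfl h01 h10 h11

/-- If two `ψGL` classes agree in `PGL₂` and the quaternions have the same nonzero
real part, then the quaternions agree. -/
lemma aux_pgl_eq_imp {c d : K} (hcd : c ^ 2 + d ^ 2 + 1 = 0) {w z : ℍ[ℤ]}
    (hw : w ≠ 0) (hz : z ≠ 0) (hre : w.re = z.re) (hre0 : w.re ≠ 0)
    (h : (QuotientGroup.mk (psiGL c d hcd w) : PGL2 K)
        = QuotientGroup.mk (psiGL c d hcd z)) : w = z := by
  rw [QuotientGroup.eq] at h
  obtain ⟨t, ht⟩ := aux_center_scalar h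
  have hmat : Mcd c d z = Mcd c d w * !![t, 0; 0, t] := by
    have hgl : (psiGL c d hcd z : GL (Fin 2) K)
        = psiGL c d hcd w * ((psiGL c d hcd w)⁻¹ * psiGL c d hcd z) := by group
    have hval := congrArg Units.val hgl
    rw [Units.val_mul, ht, aux_psiGL_val hcd hz, aux_psiGL_val hcd hw] at hval
    exact hval
  rw [Mcd, Mcd, Matrix.mul_fin_two] at hmat
  have e00 := congrFun (congrFun hmat 0) 0
  have e01 := congrFun (congrFun hmat 0) 1
  have e10 := congrFun (congrFun hmat 1) 0
  have e11 := congrFun (congrFun hmat 1) 1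
  simp only [Matrix.cons_val_zero, Matrix.cons_val_one, Matrix.head_cons, Matrix.of_apply,
    Matrix.cons_val', Matrix.head_fin_const, Matrix.empty_val', Matrix.cons_val_fin_one,
    mul_zero, mul_one, zero_add, add_zero] at e00 e01 e10 e11
  have hre0' : (w.re : K) ≠ 0 := Int.cast_ne_zero.mpr hre0
  have hreK : (z.re : K) = (w.re : K) := by exact_mod_cast hre.symm
  have ht1 : t = 1 := by
    have h2 : t * (2 * (w.re : K)) = 1 * (2 * (w.re : K)) := by
      linear_combination -e00 - e11 + 2 * hreK
    exact mul_right_cancel₀ (by simpa using hre0') h2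
  rw [ht1] at e00 e01 e10 e11
  have hI : (z.imI : K) = (w.imI : K) := by
    linear_combination (-c / 2) * e00 + (c / 2) * e11 + (d / 2) * e01 + (d / 2) * e10
      + (((z.imI : K) - (w.imI : K))) * hcd
  have hJ : (z.imJ : K) = (w.imJ : K) := by
    linear_combination (1 / 2 : K) * e01 - (1 / 2 : K) * e10
  have hK : (z.imK : K) = (w.imK : K) := by
    linear_combination (-d / 2) * e00 + (d / 2) * e11 - (c / 2) * e01 - (c / 2) * e10
      + (((z.imK : K) - (w.imK : K))) * hcd
  ext
  · exact hre
  · exact_mod_cast hI.symm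
  · exact_mod_cast hJ.symm
  · exact_mod_cast hK.symm

end AuxGL
section AuxMain

/-- The core integer computation: if `y x ȳ` commutes with `x` and `y₀ ≠ 0`,
then the imaginary parts of `x` and `y` are parallel. -/
lemma aux_core_int (x1 x2 x3 y0 y1 y2 y3 : ℤ) (hy : y0 ≠ 0)
    (h1 : 4*(x1*y1 + x2*y2 + x3*y3)*(y2*x3 - y3*x2)
        + 4*y0*((x1*y1 + x2*y2 + x3*y3)*x1 - (x1^2 + x2^2 + x3^2)*y1) = 0)
    (h2 : 4*(x1*y1 + x2*y2 + x3*y3)*(y3*x1 - y1*x3)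
        + 4*y0*((x1*y1 + x2*y2 + x3*y3)*x2 - (x1^2 + x2^2 + x3^2)*y2) = 0)
    (h3 : 4*(x1*y1 + x2*y2 + x3*y3)*(y1*x2 - y2*x1)
        + 4*y0*((x1*y1 + x2*y2 + x3*y3)*x3 - (x1^2 + x2^2 + x3^2)*y3) = 0) :
    x2*y3 - x3*y2 = 0 ∧ x3*y1 - x1*y3 = 0 ∧ x1*y2 - x2*y1 = 0 := by
  have key : 4*(x1*y1 + x2*y2 + x3*y3) *
      ((y2*x3 - y3*x2)^2 + (y3*x1 - y1*x3)^2 + (y1*x2 - y2*x1)^2) = 0 := by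
    linear_combination (y2*x3 - y3*x2) * h1 + (y3*x1 - y1*x3) * h2 + (y1*x2 - y2*x1) * h3
  rcases eq_or_ne (x1*y1 + x2*y2 + x3*y3) 0 with hD | hD
  · -- orthogonal case: each `y0 * S * y_i = 0`
    have k1 : 4 * (y0 * ((x1^2 + x2^2 + x3^2) * y1)) = 0 := by
      linear_combination -h1 + (4*(y2*x3 - y3*x2) + 4*y0*x1) * hD
    have k2 : 4 * (y0 * ((x1^2 + x2^2 + x3^2) * y2)) = 0 := by
      linear_combination -h2 + (4*(y3*x1 - y1*x3) + 4*y0*x2) * hD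
    have k3 : 4 * (y0 * ((x1^2 + x2^2 + x3^2) * y3)) = 0 := by
      linear_combination -h3 + (4*(y1*x2 - y2*x1) + 4*y0*x3) * hD
    have k1' : y0 * ((x1^2 + x2^2 + x3^2) * y1) = 0 := by linarith
    have k2' : y0 * ((x1^2 + x2^2 + x3^2) * y2) = 0 := by linarith
    have k3' : y0 * ((x1^2 + x2^2 + x3^2) * y3) = 0 := by linarith
    rcases eq_or_ne (x1^2 + x2^2 + x3^2) 0 with hS | hS
    · have q1 := sq_nonneg x1
      have q2 := sq_nonneg x2
      have q3 := sq_nonneg x3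
      have hx1 : x1 = 0 := pow_eq_zero_iff two_ne_zero |>.mp (by linarith)
      have hx2 : x2 = 0 := pow_eq_zero_iff two_ne_zero |>.mp (by linarith)
      have hx3 : x3 = 0 := pow_eq_zero_iff two_ne_zero |>.mp (by linarith)
      refine ⟨by rw [hx2, hx3]; ring, by rw [hx1, hx3]; ring, by rw [hx1, hx2]; ring⟩
    · have hy1 : y1 = 0 := by
        have := (mul_eq_zero.mp k1').resolve_left hy
        exact (mul_eq_zero.mp this).resolve_left hS
      have hy2 : y2 = 0 := by
        have := (mul_eq_zero.mp k2').resolve_left hy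
        exact (mul_eq_zero.mp this).resolve_left hS
      have hy3 : y3 = 0 := by
        have := (mul_eq_zero.mp k3').resolve_left hy
        exact (mul_eq_zero.mp this).resolve_left hS
      refine ⟨by rw [hy2, hy3]; ring, by rw [hy1, hy3]; ring, by rw [hy1, hy2]; ring⟩
  · -- non-orthogonal case: the cross product vanishes identically
    have h4D : (4 : ℤ) * (x1*y1 + x2*y2 + x3*y3) ≠ 0 := mul_ne_zero (by norm_num) hD
    have hw : (y2*x3 - y3*x2)^2 + (y3*x1 - y1*x3)^2 + (y1*x2 - y2*x1)^2 = 0 :=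
      (mul_eq_zero.mp key).resolve_left h4D
    have q1 := sq_nonneg (y2*x3 - y3*x2)
    have q2 := sq_nonneg (y3*x1 - y1*x3)
    have q3 := sq_nonneg (y1*x2 - y2*x1)
    have w1 : y2*x3 - y3*x2 = 0 := pow_eq_zero_iff two_ne_zero |>.mp (by linarith)
    have w2 : y3*x1 - y1*x3 = 0 := pow_eq_zero_iff two_ne_zero |>.mp (by linarith)
    have w3 : y1*x2 - y2*x1 = 0 := pow_eq_zero_iff two_ne_zero |>.mp (by linarith)
    exact ⟨by linear_combination -w1, by linear_combination -w2, by linear_combination -w3⟩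

/-- The core quaternion lemma: if `y x ȳ` commutes with `x` and `y.re ≠ 0`,
then `x` and `y` commute. -/
lemma aux_core (x y : ℍ[ℤ]) (hy : y.re ≠ 0)
    (h : (y * x * star y) * x = x * (y * x * star y)) : x * y = y * x := by
  have e1 := congrArg QuaternionAlgebra.imI h
  have e2 := congrArg QuaternionAlgebra.imJ h
  have e3 := congrArg QuaternionAlgebra.imK h
  simp only [Quaternion.re_mul, Quaternion.imI_mul, Quaternion.imJ_mul, Quaternion.imK_mul,
    Quaternion.re_star, Quaternion.imI_star, Quaternion.imJ_star, Quaternion.imK_star]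
    at e1 e2 e3
  obtain ⟨c1, c2, c3⟩ := aux_core_int x.imI x.imJ x.imK y.re y.imI y.imJ y.imK hy
    (by linear_combination e1) (by linear_combination e2) (by linear_combination e3)
  ext
  · simp only [Quaternion.re_mul]; ring
  · simp only [Quaternion.imI_mul]; linear_combination 2 * c1
  · simp only [Quaternion.imJ_mul]; linear_combination 2 * c2
  · simp only [Quaternion.imK_mul]; linear_combination 2 * c3

/-- Every element of `Γ` is the image of an element of `Γ̃`. -/
lemma aux_gamma_descend {p l : ℕ} [Fact p.Prime] [Fact l.Prime]
    (hp2 : p ≠ 2) (hl2 : l ≠ 2)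
    (cp dp : ℚ_[p]) (cl dl : ℚ_[l])
    (hcp : cp ^ 2 + dp ^ 2 + 1 = 0) (hcl : cl ^ 2 + dl ^ 2 + 1 = 0)
    {a : PGL2 ℚ_[p] × PGL2 ℚ_[l]} (ha : a ∈ Gamma p l cp dp cl dl hcp hcl) :
    ∃ x ∈ GammaTilde p l, a = psi p l cp dp cl dl hcp hcl x := by
  have hpp : p.Prime := Fact.out
  have hlp : l.Prime := Fact.out
  have hpo : Odd p := hpp.odd_of_ne_two hp2
  have hlo : Odd l := hlp.odd_of_ne_two hl2
  have hne : ∀ {x : ℍ[ℤ]}, x ∈ GammaTilde p l → x ≠ 0 :=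
    fun hx => aux_mem_ne_zero hpp.ne_zero hlp.ne_zero hx
  induction ha using Subgroup.closure_induction with
  | mem x hx =>
    obtain ⟨w, hw, rfl⟩ := hx
    exact ⟨w, hw, rfl⟩
  | one =>
    refine ⟨1, aux_one_mem, ?_⟩
    rw [psi, aux_psiGL_one hcp, aux_psiGL_one hcl]
    rfl
  | mul u v hu hv ihu ihv =>
    obtain ⟨x, hx, rfl⟩ := ihu
    obtain ⟨y, hy, rfl⟩ := ihv
    refine ⟨x * y, aux_mul_mem hpo hlo hx hy, ?_⟩
    rw [psi, psi, psi, aux_psiGL_mul hcp (hne hx) (hne hy),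
      aux_psiGL_mul hcl (hne hx) (hne hy)]
    rfl
  | inv u hu ihu =>
    obtain ⟨x, hx, rfl⟩ := ihu
    refine ⟨star x, aux_star_mem hx, ?_⟩
    rw [psi, psi, aux_mk_psiGL_star hcp (hne hx), aux_mk_psiGL_star hcl (hne hx)]
    rfl

end AuxMain

section AuxMk

variable {K : Type*} [Field K] [CharZero K]

lemma aux_mk_psiGL_mul {c d : K} (hcd : c ^ 2 + d ^ 2 + 1 = 0) {u v : ℍ[ℤ]}
    (hu : u ≠ 0) (hv : v ≠ 0) :
    (QuotientGroup.mk (psiGL c d hcd (u * v)) : PGL2 K)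
      = QuotientGroup.mk (psiGL c d hcd u) * QuotientGroup.mk (psiGL c d hcd v) := by
  rw [aux_psiGL_mul hcd hu hv]
  rfl

end AuxMk
/-- Lemma 4(b): for `a, b ∈ Γ`, `bab⁻¹` commutes with `a` if and only if
`b` commutes with `a`. -/
theorem conj_commute_iff_gamma (p l : ℕ) [Fact p.Prime] [Fact l.Prime]
    (hp2 : p ≠ 2) (hl2 : l ≠ 2) (hpl : p ≠ l)
    (cp dp : ℚ_[p]) (cl dl : ℚ_[l])
    (hcp : cp ^ 2 + dp ^ 2 + 1 = 0) (hcl : cl ^ 2 + dl ^ 2 + 1 = 0)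
    (a b : PGL2 ℚ_[p] × PGL2 ℚ_[l])
    (ha : a ∈ Gamma p l cp dp cl dl hcp hcl) (hb : b ∈ Gamma p l cp dp cl dl hcp hcl) :
    (b * a * b⁻¹) * a = a * (b * a * b⁻¹) ↔ b * a = a * b := by
  constructor
  · intro hcon
    obtain ⟨x, hx, rfl⟩ := aux_gamma_descend hp2 hl2 cp dp cl dl hcp hcl ha
    obtain ⟨y, hy, rfl⟩ := aux_gamma_descend hp2 hl2 cp dp cl dl hcp hcl hb
    have hpp : p.Prime := Fact.out
    have hlp : l.Prime := Fact.out
    have hpo : Odd p := hpp.odd_of_ne_two hp2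
    have hlo : Odd l := hlp.odd_of_ne_two hl2
    have hne : ∀ {w : ℍ[ℤ]}, w ∈ GammaTilde p l → w ≠ 0 :=
      fun hw => aux_mem_ne_zero hpp.ne_zero hlp.ne_zero hw
    have hx0 := hne hx
    have hy0 := hne hy
    have hyx : y * x ∈ GammaTilde p l := aux_mul_mem hpo hlo hy hx
    have hsy : star y ∈ GammaTilde p l := aux_star_mem hy
    have hz : y * x * star y ∈ GammaTilde p l := aux_mul_mem hpo hlo hyx hsy
    have hzx : (y * x * star y) * x ∈ GammaTilde p l := aux_mul_mem hpo hlo hz hx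
    have hxz : x * (y * x * star y) ∈ GammaTilde p l := aux_mul_mem hpo hlo hx hz
    -- the first component of the hypothesis
    have hc1 := congrArg Prod.fst hcon
    simp only [Prod.fst_mul, Prod.fst_inv, psi] at hc1
    have hzsplit : (QuotientGroup.mk (psiGL cp dp hcp (y * x * star y)) : PGL2 ℚ_[p])
        = QuotientGroup.mk (psiGL cp dp hcp y) * QuotientGroup.mk (psiGL cp dp hcp x)
          * (QuotientGroup.mk (psiGL cp dp hcp y))⁻¹ := by
      rw [aux_mk_psiGL_mul hcp (hne hyx) (hne hsy), aux_mk_psiGL_mul hcp hy0 hx0,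
        aux_mk_psiGL_star hcp hy0]
    have key : (QuotientGroup.mk (psiGL cp dp hcp ((y * x * star y) * x)) : PGL2 ℚ_[p])
        = QuotientGroup.mk (psiGL cp dp hcp (x * (y * x * star y))) := by
      rw [aux_mk_psiGL_mul hcp (hne hz) hx0, aux_mk_psiGL_mul hcp hx0 (hne hz), hzsplit]
      exact hc1
    -- transfer to quaternions
    have hre : ((y * x * star y) * x).re = (x * (y * x * star y)).re := by
      simp only [Quaternion.re_mul]; ring
    have hre0 : ((y * x * star y) * x).re ≠ 0 := by
      intro h0
      have hodd := aux_mem_odd_re hpo hlo hzx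
      rw [h0, Int.odd_iff] at hodd
      omega
    have hq : (y * x * star y) * x = x * (y * x * star y) :=
      aux_pgl_eq_imp hcp (hne hzx) (hne hxz) hre hre0 key
    -- the core argument
    have hyre : y.re ≠ 0 := by
      intro h0
      have hodd := aux_mem_odd_re hpo hlo hy
      rw [h0, Int.odd_iff] at hodd
      omega
    have hcomm : x * y = y * x := aux_core x y hyre hq
    -- conclude
    have h1 : (QuotientGroup.mk (psiGL cp dp hcp y) : PGL2 ℚ_[p])
          * QuotientGroup.mk (psiGL cp dp hcp x)
        = QuotientGroup.mk (psiGL cp dp hcp x) * QuotientGroup.mk (psiGL cp dp hcp y) := by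
      rw [← aux_mk_psiGL_mul hcp hy0 hx0, ← aux_mk_psiGL_mul hcp hx0 hy0, hcomm]
    have h2 : (QuotientGroup.mk (psiGL cl dl hcl y) : PGL2 ℚ_[l])
          * QuotientGroup.mk (psiGL cl dl hcl x)
        = QuotientGroup.mk (psiGL cl dl hcl x) * QuotientGroup.mk (psiGL cl dl hcl y) := by
      rw [← aux_mk_psiGL_mul hcl hy0 hx0, ← aux_mk_psiGL_mul hcl hx0 hy0, hcomm]
    exact Prod.ext h1 h2
  · intro h
    have hb' : b * a * b⁻¹ = a := by rw [h, mul_inv_cancel_right]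
    rw [hb']
end
end
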